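/- For each a ∈ {1, 2, 3} and ε ∈ {1, −1}, the eigenspace H_a(ε) is invariant under both φ and φ_a; more precisely φ(H_a(ε)) = H_a(ε) = φ_a(H_a(ε)). -/

import Mathlib

open RealInnerProductSpace

/-- An almost contact metric structure `(φ, ξ, η)` together with an almost contact metric
3-structure `(φ_a, ξ_a, η_a)`, `a ∈ {1,2,3}` (indices mod 3), on a real inner product space `V`,
modelling the structures induced on the tangent space of a real hypersurface in the complex
two-plane Grassmannian `G₂(ℂ^{m+2})` by the Kaehler structure `J` and the quaternionic Kaehler
structure `𝔍`.  Here `η(X) = ⟪ξ, X⟫` and `η_a(X) = ⟪ξ_a, X⟫` are written out via the inner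
product. -/
structure ACMS3 (V : Type*) [NormedAddCommGroup V] [InnerProductSpace ℝ V] where
  phi : V →ₗ[ℝ] V
  xi : V
  phiA : Fin 3 → V →ₗ[ℝ] V
  xiA : Fin 3 → V
  xi_unit : ‖xi‖ = 1
  phi_sq : ∀ X : V, phi (phi X) = -X + ⟪xi, X⟫ • xi
  phi_xi : phi xi = 0
  phi_metric : ∀ X Y : V, ⟪phi X, phi Y⟫ = ⟪X, Y⟫ - ⟪xi, X⟫ * ⟪xi, Y⟫
  xiA_unit : ∀ a, ‖xiA a‖ = 1
  phiA_sq : ∀ a (X : V), phiA a (phiA a X) = -X + ⟪xiA a, X⟫ • xiA a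
  phiA_xiA : ∀ a, phiA a (xiA a) = 0
  phiA_metric : ∀ a (X Y : V),
    ⟪phiA a X, phiA a Y⟫ = ⟪X, Y⟫ - ⟪xiA a, X⟫ * ⟪xiA a, Y⟫
  quat1 : ∀ a (X : V), phiA a (phiA (a + 1) X) - ⟪xiA (a + 1), X⟫ • xiA a = phiA (a + 2) X
  quat2 : ∀ a (X : V),
    phiA (a + 2) X = -(phiA (a + 1) (phiA a X)) + ⟪xiA a, X⟫ • xiA (a + 1)
  quat_xi1 : ∀ a, phiA a (xiA (a + 1)) = xiA (a + 2)
  quat_xi2 : ∀ a, xiA (a + 2) = -(phiA (a + 1) (xiA a))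
  rel : ∀ a (X : V), phiA a (phi X) - ⟪xi, X⟫ • xiA a = phi (phiA a X) - ⟪xiA a, X⟫ • xi
  rel_xi : ∀ a, phi (xiA a) = phiA a xi

variable {V : Type*} [NormedAddCommGroup V] [InnerProductSpace ℝ V]

/-- The endomorphism `θ_a X := φ_a φ X − η(X) ξ_a`. -/
noncomputable def ACMS3.theta (S : ACMS3 V) (a : Fin 3) : V →ₗ[ℝ] V where
  toFun X := S.phiA a (S.phi X) - ⟪S.xi, X⟫ • S.xiA a
  map_add' X Y := by
    simp only [map_add, inner_add_right, add_smul]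
    abel
  map_smul' r X := by
    simp only [map_smul, inner_smul_right, RingHom.id_apply, smul_sub, smul_smul]

/-- `H^⊥ = span{ξ, ξ₁, ξ₂, ξ₃, φξ₁, φξ₂, φξ₃}`. -/
noncomputable def ACMS3.Hperp (S : ACMS3 V) : Submodule ℝ V :=
  Submodule.span ℝ {S.xi, S.xiA 0, S.xiA 1, S.xiA 2,
    S.phi (S.xiA 0), S.phi (S.xiA 1), S.phi (S.xiA 2)}

/-- `H` is the orthogonal complement of `H^⊥` in `V`. -/
noncomputable def ACMS3.H (S : ACMS3 V) : Submodule ℝ V := S.Hperpᗮ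

/-- `H_a(ε)`, the eigenspace of `θ_a` restricted to `H` corresponding to the eigenvalue `ε`. -/
noncomputable def ACMS3.eigenH (S : ACMS3 V) (a : Fin 3) (ε : ℝ) : Submodule ℝ V :=
  S.H ⊓ Module.End.eigenspace (S.theta a) ε

/-- The normal Jacobi operator
`R̂_N X = X + 3η(X)ξ + Σ_a (3η_a(X)ξ_a − η(ξ_a)θ_a X + η_a(φX)φξ_a)`. -/
noncomputable def ACMS3.jacobi (S : ACMS3 V) (X : V) : V :=
  X + (3 * ⟪S.xi, X⟫) • S.xi +
    ∑ a : Fin 3, ((3 * ⟪S.xiA a, X⟫) • S.xiA a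
      - ⟪S.xi, S.xiA a⟫ • S.theta a X
      + ⟪S.xiA a, S.phi X⟫ • S.phi (S.xiA a))


section Aux

variable {V : Type*} [NormedAddCommGroup V] [InnerProductSpace ℝ V]

private lemma aux_eta {f : V →ₗ[ℝ] V} {u : V} (hu : ‖u‖ = 1)
    (hsq : ∀ X : V, f (f X) = -X + ⟪u, X⟫ • u) (hu0 : f u = 0)
    (hm : ∀ X Y : V, ⟪f X, f Y⟫ = ⟪X, Y⟫ - ⟪u, X⟫ * ⟪u, Y⟫) (X : V) :
    ⟪u, f X⟫ = 0 := by
  have huu : ⟪u, u⟫ = 1 := by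
    rw [real_inner_self_eq_norm_mul_norm, hu]; norm_num
  set Y := X - ⟪u, X⟫ • u with hY
  have hfY : f Y = f X := by
    simp [hY, map_sub, map_smul, hu0]
  have hηY : ⟪u, Y⟫ = 0 := by
    simp [hY, inner_sub_right, inner_smul_right, huu, hu]
  have h1 : f (f Y) = -Y := by rw [hsq, hηY]; simp
  have h2 := hm (f Y) (f Y)
  rw [h1, inner_neg_neg] at h2
  have h3 := hm Y Y
  rw [hηY] at h3
  have hc : ⟪u, f Y⟫ * ⟪u, f Y⟫ = 0 := by linarith [h2, h3]
  have := mul_self_eq_zero.mp hc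
  rw [hfY] at this
  exact this

private lemma aux_skew {f : V →ₗ[ℝ] V} {u : V} (hu : ‖u‖ = 1)
    (hsq : ∀ X : V, f (f X) = -X + ⟪u, X⟫ • u) (hu0 : f u = 0)
    (hm : ∀ X Y : V, ⟪f X, f Y⟫ = ⟪X, Y⟫ - ⟪u, X⟫ * ⟪u, Y⟫) (X Y : V) :
    ⟪f X, Y⟫ = -⟪X, f Y⟫ := by
  have h := hm X (f Y)
  rw [hsq Y, inner_add_right, inner_neg_right, inner_smul_right] at h
  have e1 : ⟪u, f Y⟫ = 0 := aux_eta hu hsq hu0 hm Y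
  have e2 : ⟪f X, u⟫ = 0 := by rw [real_inner_comm]; exact aux_eta hu hsq hu0 hm X
  rw [e1, e2] at h
  linarith

end Aux

namespace ACMS3

variable {V : Type*} [NormedAddCommGroup V] [InnerProductSpace ℝ V] (S : ACMS3 V)

lemma eta_phi (X : V) : ⟪S.xi, S.phi X⟫ = 0 :=
  aux_eta S.xi_unit S.phi_sq S.phi_xi S.phi_metric X

lemma skew (X Y : V) : ⟪S.phi X, Y⟫ = -⟪X, S.phi Y⟫ :=
  aux_skew S.xi_unit S.phi_sq S.phi_xi S.phi_metric X Y

lemma eta_phiA (a : Fin 3) (X : V) : ⟪S.xiA a, S.phiA a X⟫ = 0 :=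
  aux_eta (S.xiA_unit a) (S.phiA_sq a) (S.phiA_xiA a) (S.phiA_metric a) X

lemma skewA (a : Fin 3) (X Y : V) : ⟪S.phiA a X, Y⟫ = -⟪X, S.phiA a Y⟫ :=
  aux_skew (S.xiA_unit a) (S.phiA_sq a) (S.phiA_xiA a) (S.phiA_metric a) X Y

lemma phiA_xiA_prev (a : Fin 3) : S.phiA a (S.xiA (a + 2)) = -(S.xiA (a + 1)) := by
  have h := S.quat_xi2 (a + 2)
  have e1 : a + 2 + 2 = a + 1 := by omega
  have e2 : a + 2 + 1 = a := by omega
  rw [e1, e2] at h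
  rw [h, neg_neg]

lemma quatC (a : Fin 3) (X : V) :
    S.phiA a (S.phiA (a + 2) X) = -(S.phiA (a + 1) X) + ⟪S.xiA (a + 2), X⟫ • S.xiA a := by
  have h := S.quat2 (a + 2) X
  have e1 : a + 2 + 2 = a + 1 := by omega
  have e2 : a + 2 + 1 = a := by omega
  rw [e1, e2] at h
  rw [h]; abel

lemma xi_mem : S.xi ∈ S.Hperp := Submodule.subset_span (by simp)

lemma xiA_mem (b : Fin 3) : S.xiA b ∈ S.Hperp := by
  fin_cases b <;> exact Submodule.subset_span (by simp)

lemma phi_xiA_mem (b : Fin 3) : S.phi (S.xiA b) ∈ S.Hperp := by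
  fin_cases b <;> exact Submodule.subset_span (by simp)

lemma phiA_xiA_mem (a b : Fin 3) : S.phiA a (S.xiA b) ∈ S.Hperp := by
  have h : b = a ∨ b = a + 1 ∨ b = a + 2 := by omega
  rcases h with rfl | rfl | rfl
  · rw [S.phiA_xiA]; exact zero_mem _
  · rw [S.quat_xi1]; exact S.xiA_mem _
  · rw [S.phiA_xiA_prev]; exact neg_mem (S.xiA_mem _)

lemma phiA_phi_xiA_mem (a b : Fin 3) : S.phiA a (S.phi (S.xiA b)) ∈ S.Hperp := by
  rw [S.rel_xi]
  have h : b = a ∨ b = a + 1 ∨ b = a + 2 := by omega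
  rcases h with rfl | rfl | rfl
  · rw [S.phiA_sq]
    exact add_mem (neg_mem S.xi_mem) (Submodule.smul_mem _ _ (S.xiA_mem _))
  · have h1 := S.quat1 a S.xi
    have h2 : S.phiA a (S.phiA (a + 1) S.xi) =
        S.phiA (a + 2) S.xi + ⟪S.xiA (a + 1), S.xi⟫ • S.xiA a := by
      rw [← h1]; abel
    rw [h2, ← S.rel_xi]
    exact add_mem (S.phi_xiA_mem _) (Submodule.smul_mem _ _ (S.xiA_mem _))
  · rw [S.quatC, ← S.rel_xi]
    exact add_mem (neg_mem (S.phi_xiA_mem _)) (Submodule.smul_mem _ _ (S.xiA_mem _))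

lemma phi_mem_Hperp {u : V} (hu : u ∈ S.Hperp) : S.phi u ∈ S.Hperp := by
  induction hu using Submodule.span_induction with
  | mem x hx =>
    simp only [Set.mem_insert_iff, Set.mem_singleton_iff] at hx
    rcases hx with rfl | rfl | rfl | rfl | rfl | rfl | rfl
    · rw [S.phi_xi]; exact zero_mem _
    · exact S.phi_xiA_mem 0
    · exact S.phi_xiA_mem 1
    · exact S.phi_xiA_mem 2
    all_goals
      rw [S.phi_sq]
      exact add_mem (neg_mem (S.xiA_mem _)) (Submodule.smul_mem _ _ S.xi_mem)
  | zero => simpa using zero_mem S.Hperp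
  | add x y hx hy ihx ihy => simpa [map_add] using add_mem ihx ihy
  | smul r x hx ih => simpa [map_smul] using Submodule.smul_mem _ r ih

lemma phiA_mem_Hperp (a : Fin 3) {u : V} (hu : u ∈ S.Hperp) : S.phiA a u ∈ S.Hperp := by
  induction hu using Submodule.span_induction with
  | mem x hx =>
    simp only [Set.mem_insert_iff, Set.mem_singleton_iff] at hx
    rcases hx with rfl | rfl | rfl | rfl | rfl | rfl | rfl
    · rw [← S.rel_xi]; exact S.phi_xiA_mem a
    · exact S.phiA_xiA_mem a 0
    · exact S.phiA_xiA_mem a 1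
    · exact S.phiA_xiA_mem a 2
    · exact S.phiA_phi_xiA_mem a 0
    · exact S.phiA_phi_xiA_mem a 1
    · exact S.phiA_phi_xiA_mem a 2
  | zero => simpa using zero_mem S.Hperp
  | add x y hx hy ihx ihy => simpa [map_add] using add_mem ihx ihy
  | smul r x hx ih => simpa [map_smul] using Submodule.smul_mem _ r ih

lemma inner_zero_of_mem_H {X : V} (hX : X ∈ S.H) {u : V} (hu : u ∈ S.Hperp) :
    ⟪u, X⟫ = 0 := (Submodule.mem_orthogonal _ _).mp hX u hu

lemma phi_mem_H {X : V} (hX : X ∈ S.H) : S.phi X ∈ S.H := by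
  rw [ACMS3.H, Submodule.mem_orthogonal]
  intro u hu
  have h := S.skew u X
  have h0 : ⟪S.phi u, X⟫ = 0 := S.inner_zero_of_mem_H hX (S.phi_mem_Hperp hu)
  linarith

lemma phiA_mem_H (a : Fin 3) {X : V} (hX : X ∈ S.H) : S.phiA a X ∈ S.H := by
  rw [ACMS3.H, Submodule.mem_orthogonal]
  intro u hu
  have h := S.skewA a u X
  have h0 : ⟪S.phiA a u, X⟫ = 0 := S.inner_zero_of_mem_H hX (S.phiA_mem_Hperp a hu)
  linarith

lemma theta_apply (a : Fin 3) (X : V) :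
    S.theta a X = S.phiA a (S.phi X) - ⟪S.xi, X⟫ • S.xiA a := rfl

lemma inner_xi_of_mem_H {X : V} (hX : X ∈ S.H) : ⟪S.xi, X⟫ = 0 :=
  S.inner_zero_of_mem_H hX S.xi_mem

lemma inner_xiA_of_mem_H (a : Fin 3) {X : V} (hX : X ∈ S.H) : ⟪S.xiA a, X⟫ = 0 :=
  S.inner_zero_of_mem_H hX (S.xiA_mem a)

lemma inner_xiA_phi_of_mem_H (a : Fin 3) {X : V} (hX : X ∈ S.H) :
    ⟪S.xiA a, S.phi X⟫ = 0 := by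
  have h := S.skew (S.xiA a) X
  have h0 : ⟪S.phi (S.xiA a), X⟫ = 0 := S.inner_zero_of_mem_H hX (S.phi_xiA_mem a)
  linarith

lemma inner_xi_phiA_of_mem_H (a : Fin 3) {X : V} (hX : X ∈ S.H) :
    ⟪S.xi, S.phiA a X⟫ = 0 := by
  have h := S.skewA a S.xi X
  rw [← S.rel_xi] at h
  have h0 : ⟪S.phi (S.xiA a), X⟫ = 0 := S.inner_zero_of_mem_H hX (S.phi_xiA_mem a)
  linarith

lemma theta_phi_comm (a : Fin 3) {X : V} (hX : X ∈ S.H) :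
    S.theta a (S.phi X) = S.phi (S.theta a X) := by
  have hξ : ⟪S.xi, X⟫ = 0 := S.inner_xi_of_mem_H hX
  have hξφ : ⟪S.xi, S.phi X⟫ = 0 := S.eta_phi X
  have hξaφ : ⟪S.xiA a, S.phi X⟫ = 0 := S.inner_xiA_phi_of_mem_H a hX
  have hrel := S.rel a (S.phi X)
  rw [hξφ, hξaφ, zero_smul, zero_smul, sub_zero, sub_zero] at hrel
  rw [theta_apply, theta_apply, hξφ, hξ]
  simp only [zero_smul, sub_zero]
  exact hrel

lemma theta_phiA_comm (a : Fin 3) {X : V} (hX : X ∈ S.H) :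
    S.theta a (S.phiA a X) = S.phiA a (S.theta a X) := by
  have hξ : ⟪S.xi, X⟫ = 0 := S.inner_xi_of_mem_H hX
  have hξa : ⟪S.xiA a, X⟫ = 0 := S.inner_xiA_of_mem_H a hX
  have hξφa : ⟪S.xi, S.phiA a X⟫ = 0 := S.inner_xi_phiA_of_mem_H a hX
  have hξaφ : ⟪S.xiA a, S.phi X⟫ = 0 := S.inner_xiA_phi_of_mem_H a hX
  have hrel := S.rel a X
  rw [hξ, hξa, zero_smul, zero_smul, sub_zero, sub_zero] at hrel
  rw [theta_apply, theta_apply, hξ, hξφa]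
  simp only [zero_smul, sub_zero]
  rw [← hrel]

lemma phi_mem_eigenH (a : Fin 3) (ε : ℝ) {x : V} (hx : x ∈ S.eigenH a ε) :
    S.phi x ∈ S.eigenH a ε := by
  obtain ⟨hH, hE⟩ := Submodule.mem_inf.mp hx
  refine Submodule.mem_inf.mpr ⟨S.phi_mem_H hH, ?_⟩
  rw [Module.End.mem_eigenspace_iff] at hE ⊢
  rw [S.theta_phi_comm a hH, hE, map_smul]

lemma phiA_mem_eigenH (a : Fin 3) (ε : ℝ) {x : V} (hx : x ∈ S.eigenH a ε) :
    S.phiA a x ∈ S.eigenH a ε := by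
  obtain ⟨hH, hE⟩ := Submodule.mem_inf.mp hx
  refine Submodule.mem_inf.mpr ⟨S.phiA_mem_H a hH, ?_⟩
  rw [Module.End.mem_eigenspace_iff] at hE ⊢
  rw [S.theta_phiA_comm a hH, hE, map_smul]

end ACMS3

/-- For each `a ∈ {1,2,3}` and `ε ∈ {1,−1}`, the eigenspace `H_a(ε)` is invariant
under both `φ` and `φ_a`; more precisely `φ(H_a(ε)) = H_a(ε) = φ_a(H_a(ε))`. -/
theorem eigenH_phi_invariant [FiniteDimensional ℝ V] (S : ACMS3 V) (a : Fin 3)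
    (ε : ℝ) (hε : ε = 1 ∨ ε = -1) :
    (S.eigenH a ε).map S.phi = S.eigenH a ε ∧
    (S.eigenH a ε).map (S.phiA a) = S.eigenH a ε := by
  constructor
  · apply le_antisymm
    · rintro _ ⟨x, hx, rfl⟩
      exact S.phi_mem_eigenH a ε hx
    · intro x hx
      have hH : x ∈ S.H := (Submodule.mem_inf.mp hx).1
      refine ⟨-(S.phi x), neg_mem (S.phi_mem_eigenH a ε hx), ?_⟩
      rw [map_neg, S.phi_sq, S.inner_xi_of_mem_H hH, zero_smul, add_zero, neg_neg]
  · apply le_antisymm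
    · rintro _ ⟨x, hx, rfl⟩
      exact S.phiA_mem_eigenH a ε hx
    · intro x hx
      have hH : x ∈ S.H := (Submodule.mem_inf.mp hx).1
      refine ⟨-(S.phiA a x), neg_mem (S.phiA_mem_eigenH a ε hx), ?_⟩
      rw [map_neg, S.phiA_sq, S.inner_xiA_of_mem_H a hH, zero_smul, add_zero, neg_neg]
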